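/- Let g ∈ SL(2,ℝ) act on the upper half-plane H² by Möbius transformations, and suppose g fixes no point of H² (i.e., g•z ≠ z for all z ∈ H², so g is hyperbolic or parabolic). Then for every z ∈ H², the equidistant line between z and g•z is disjoint from the equidistant line between g•z and g²•z: there is no w ∈ H² with d(w, z) = d(w, g•z) and d(w, g•z) = d(w, g²•z). -/

import Mathlib

open UpperHalfPlane Matrix

noncomputable section
set_option maxHeartbeats 2000000

local notation "SL2" => Matrix.SpecialLinearGroup (Fin 2) ℝ

lemma det' (g : SL2) : g 0 0 * g 1 1 - g 0 1 * g 1 0 = 1 := by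
  have := g.det_coe; rwa [Matrix.det_fin_two] at this

lemma denom_ne' (g : SL2) (z : ℍ) : ((g 1 0 : ℝ) : ℂ) * z + ((g 1 1 : ℝ) : ℂ) ≠ 0 := by
  intro h0
  have him := congrArg Complex.im h0
  have hre := congrArg Complex.re h0
  simp [Complex.add_im, Complex.add_re, Complex.mul_im, Complex.mul_re] at him hre
  have hc : g 1 0 = 0 := by
    rcases him with h | h
    · exact h
    · exact absurd h (UpperHalfPlane.im_ne_zero z)
  rw [hc] at hre; simp at hre
  have := det' g
  rw [hc, hre] at this; simp at this

lemma smul_coe' (g : SL2) (z : ℍ) :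
    ((g • z : ℍ) : ℂ) = ((g 0 0 : ℝ) * z + (g 0 1 : ℝ)) / ((g 1 0 : ℝ) * z + (g 1 1 : ℝ)) := by
  rw [UpperHalfPlane.specialLinearGroup_apply]; simp

lemma smul_eq_iff' (g : SL2) (z w : ℍ) :
    g • z = w ↔ ((g 0 0 : ℝ) : ℂ) * z + (g 0 1 : ℝ) = (w : ℂ) * (((g 1 0 : ℝ) : ℂ) * z + (g 1 1 : ℝ)) := by
  rw [← UpperHalfPlane.ext_iff', smul_coe', div_eq_iff (denom_ne' g z)]

lemma exists_fixed (g : SL2) (h : (g 0 0 + g 1 1) ^ 2 < 4) : ∃ z : ℍ, g • z = z := by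
  set a := g 0 0; set b := g 0 1; set c := g 1 0; set d := g 1 1
  have hdet : a * d - b * c = 1 := det' g
  have hc : c ≠ 0 := by
    intro hc0
    rw [hc0] at hdet; simp at hdet
    nlinarith [sq_nonneg (a - d)]
  set ε : ℝ := if 0 < c then 1 else -1 with hε
  have hε2 : ε ^ 2 = 1 := by by_cases h' : 0 < c <;> simp [hε, h']
  have hεc : 0 < ε / c := by
    rcases lt_or_gt_of_ne hc with h' | h'
    · rw [hε, if_neg (by linarith)]
      exact div_pos_of_neg_of_neg (by norm_num) h'
    · rw [hε, if_pos h']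
      exact div_pos one_pos h'
  set δ : ℝ := Real.sqrt (4 - (a + d) ^ 2) with hδ
  have hδpos : 0 < δ := Real.sqrt_pos.2 (by linarith)
  have hδ2 : δ ^ 2 = 4 - (a + d) ^ 2 := Real.sq_sqrt (by linarith)
  set z₀ : ℂ := (((a - d) : ℝ) + (ε * δ : ℝ) * Complex.I) / (2 * c) with hz₀
  have him : z₀.im = ε * δ / (2 * c) := by
    rw [hz₀, Complex.div_im]
    push_cast
    simp [Complex.normSq_apply]
    field_simp
  have himpos : 0 < z₀.im := by
    rw [him]
    have : ε * δ / (2 * c) = (ε / c) * (δ / 2) := by ring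
    rw [this]; positivity
  have hcC : (c : ℂ) ≠ 0 := by exact_mod_cast hc
  have hε2C : ((ε : ℝ) : ℂ) ^ 2 = 1 := by exact_mod_cast hε2
  have hδ2C : ((δ : ℝ) : ℂ) ^ 2 = 4 - ((a : ℂ) + (d : ℂ)) ^ 2 := by exact_mod_cast hδ2
  have hdetC : (a : ℂ) * (d : ℂ) - (b : ℂ) * (c : ℂ) = 1 := by exact_mod_cast hdet
  have key : (c : ℂ) * z₀ ^ 2 + (((d : ℝ) : ℂ) - ((a : ℝ) : ℂ)) * z₀ - ((b : ℝ) : ℂ) = 0 := by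
    rw [hz₀]
    field_simp
    push_cast
    linear_combination ((ε:ℂ)^2 * (δ:ℂ)^2) * Complex.I_sq - (δ:ℂ)^2 * hε2C - hδ2C + 4 * hdetC
  refine ⟨⟨z₀, himpos⟩, ?_⟩
  rw [smul_eq_iff']
  show (a : ℂ) * z₀ + (b:ℝ) = z₀ * ((c:ℝ) * z₀ + (d:ℝ))
  linear_combination -key

lemma dist_eq_dist_iff (w z z' : ℍ) :
    dist w z = dist w z' ↔
      z'.im * Complex.normSq ((w : ℂ) - z) = z.im * Complex.normSq ((w : ℂ) - z') := by
  have h1 : 0 < w.im * z.im := mul_pos w.im_pos z.im_pos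
  have h2 : 0 < w.im * z'.im := mul_pos w.im_pos z'.im_pos
  have hw4 : (4 : ℝ) * w.im ≠ 0 := by positivity
  constructor
  · intro h
    have hs : Real.sinh (dist w z / 2) = Real.sinh (dist w z' / 2) := by rw [h]
    rw [UpperHalfPlane.sinh_half_dist, UpperHalfPlane.sinh_half_dist] at hs
    rw [div_eq_div_iff (by positivity) (by positivity)] at hs
    have hsq := congrArg (· ^ 2) hs
    simp only [mul_pow, Complex.dist_eq, Complex.sq_norm] at hsq
    rw [Real.sq_sqrt h2.le, Real.sq_sqrt h1.le] at hsq
    apply mul_left_cancel₀ hw4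
    linear_combination hsq
  · intro h
    have key : Complex.normSq ((w : ℂ) - z) * (2 ^ 2 * (w.im * z'.im))
        = Complex.normSq ((w : ℂ) - z') * (2 ^ 2 * (w.im * z.im)) := by
      linear_combination (4 * w.im) * h
    have habs : ‖(w : ℂ) - z‖ * (2 * Real.sqrt (w.im * z'.im))
        = ‖(w : ℂ) - z'‖ * (2 * Real.sqrt (w.im * z.im)) := by
      have ha : 0 ≤ ‖(w : ℂ) - z‖ * (2 * Real.sqrt (w.im * z'.im)) := by positivity
      have hb : 0 ≤ ‖(w : ℂ) - z'‖ * (2 * Real.sqrt (w.im * z.im)) := by positivity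
      rw [← Real.sqrt_sq ha, ← Real.sqrt_sq hb]
      congr 1
      simp only [mul_pow, Complex.sq_norm]
      rw [Real.sq_sqrt h2.le, Real.sq_sqrt h1.le]
      exact key
    have hs : Real.sinh (dist w z / 2) = Real.sinh (dist w z' / 2) := by
      rw [UpperHalfPlane.sinh_half_dist, UpperHalfPlane.sinh_half_dist,
        div_eq_div_iff (by positivity) (by positivity), Complex.dist_eq, Complex.dist_eq]
      exact habs
    have := Real.sinh_injective hs
    linarith

/-- the point `t * i` on the imaginary axis -/
def vpt (t : ℝ) (ht : 0 < t) : ℍ := UpperHalfPlane.mk ((t : ℝ) * Complex.I) (by simpa using ht)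

lemma vpt_im (t : ℝ) (ht : 0 < t) : (vpt t ht).im = t := by simp [vpt, UpperHalfPlane.mk_im]
lemma vpt_re (t : ℝ) (ht : 0 < t) : (vpt t ht).re = 0 := by simp [vpt, UpperHalfPlane.mk_re]
lemma vpt_coe (t : ℝ) (ht : 0 < t) : ((vpt t ht : ℍ) : ℂ) = (t : ℝ) * Complex.I := rfl

lemma circle_of_equidist (t : ℝ) (ht : 0 < t) (ht1 : t ≠ 1) (w : ℍ)
    (h : dist w I = dist w (vpt t ht)) : w.re ^ 2 + w.im ^ 2 = t := by
  rw [dist_eq_dist_iff] at h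
  rw [vpt_im] at h
  have hIim : (I : ℍ).im = 1 := rfl
  rw [hIim] at h
  have hIco : ((I : ℍ) : ℂ) = Complex.I := rfl
  rw [hIco, vpt_coe] at h
  simp only [Complex.normSq_apply, Complex.sub_re, Complex.sub_im, Complex.mul_re,
    Complex.mul_im, Complex.I_re, Complex.I_im, Complex.ofReal_re, Complex.ofReal_im,
    UpperHalfPlane.coe_re, UpperHalfPlane.coe_im] at h
  have ht1' : t - 1 ≠ 0 := sub_ne_zero.2 ht1
  apply mul_left_cancel₀ ht1'
  ring_nf
  ring_nf at h
  linarith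
lemma lemB (g : SL2) (t : ℝ) (ht : 0 < t) (ht1 : t ≠ 1)
    (htr : 4 ≤ (g 0 0 + g 1 1) ^ 2) (hgi : g • I = vpt t ht) (w : ℍ)
    (e1 : dist w I = dist w (vpt t ht))
    (e2 : dist w (vpt t ht) = dist w (g • vpt t ht)) : False := by
  set a := g 0 0 with ha; set b := g 0 1 with hb; set c := g 1 0 with hc; set d := g 1 1 with hd
  have hdet : a * d - b * c = 1 := det' g
  -- entries from g • I = t*i
  have hcross := (smul_eq_iff' g I (vpt t ht)).1 hgi
  rw [vpt_coe] at hcross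
  have hIco : ((I : ℍ) : ℂ) = Complex.I := rfl
  rw [hIco] at hcross
  have had : a = t * d ∧ b = -(t * c) := by
    have hre := congrArg Complex.re hcross
    have him := congrArg Complex.im hcross
    simp [Complex.add_re, Complex.add_im, Complex.mul_re, Complex.mul_im, Complex.I_re,
      Complex.I_im, Complex.ofReal_re, Complex.ofReal_im] at hre him
    constructor <;> linarith
  obtain ⟨hA, hB⟩ := had
  -- w on circle
  have h1 : w.re ^ 2 + w.im ^ 2 = t := circle_of_equidist t ht ht1 w e1
  -- w2 := g⁻¹ • w also on circle
  set w2 : ℍ := g⁻¹ • w with hw2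
  have hI' : g⁻¹ • (vpt t ht) = I := by rw [← hgi, inv_smul_smul]
  have e2' : dist w2 I = dist w2 (vpt t ht) := by
    calc dist w2 I = dist (g • w2) (g • I) := (dist_smul g w2 I).symm
      _ = dist w (vpt t ht) := by rw [hw2, smul_inv_smul, hgi]
      _ = dist w (g • vpt t ht) := e2
      _ = dist (g⁻¹ • w) (g⁻¹ • (g • vpt t ht)) := (dist_smul g⁻¹ w _).symm
      _ = dist w2 (vpt t ht) := by rw [inv_smul_smul, hw2]
  have h2 : w2.re ^ 2 + w2.im ^ 2 = t := circle_of_equidist t ht ht1 w2 e2'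
  -- coordinates of w2
  have hinv := Matrix.SpecialLinearGroup.SL2_inv_expl g
  have hg00 : g⁻¹ 0 0 = d := by rw [hinv]; rfl
  have hg01 : g⁻¹ 0 1 = -b := by rw [hinv]; rfl
  have hg10 : g⁻¹ 1 0 = -c := by rw [hinv]; rfl
  have hg11 : g⁻¹ 1 1 = a := by rw [hinv]; rfl
  have hw2coe : ((w2 : ℍ) : ℂ) = ((d : ℝ) * w + (-b : ℝ)) / ((-c : ℝ) * w + (a : ℝ)) := by
    rw [hw2, smul_coe' g⁻¹ w, hg00, hg01, hg10, hg11]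
  have hden : ((-c : ℝ) : ℂ) * w + ((a : ℝ) : ℂ) ≠ 0 := by
    have := denom_ne' g⁻¹ w
    rwa [hg10, hg11] at this
  -- normSq equation
  have hqpos : 0 < Complex.normSq (((-c : ℝ) : ℂ) * (w : ℂ) + ((a : ℝ) : ℂ)) :=
    Complex.normSq_pos.2 hden
  have hnsq : Complex.normSq ((w2 : ℍ) : ℂ) = t := by
    rw [Complex.normSq_apply, UpperHalfPlane.coe_re, UpperHalfPlane.coe_im]
    nlinarith [h2]
  rw [hw2coe, Complex.normSq_div, div_eq_iff (ne_of_gt hqpos)] at hnsq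
  -- expand
  set u := w.re with hu; set v := w.im with hv
  have h2' : (d * u - b) ^ 2 + (d * v) ^ 2 = t * ((-c * u + a) ^ 2 + (c * v) ^ 2) := by
    simp only [Complex.normSq_apply, Complex.add_re, Complex.add_im, Complex.mul_re,
      Complex.mul_im, Complex.ofReal_re, Complex.ofReal_im, Complex.ofReal_neg,
      Complex.neg_re, Complex.neg_im, UpperHalfPlane.coe_re, UpperHalfPlane.coe_im] at hnsq
    ring_nf at hnsq ⊢
    linarith [hnsq]
  have hvpos : 0 < v := w.im_pos
  -- final algebra
  rw [hA] at h2' htr hdet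
  rw [hB] at h2' hdet
  have hdet2 : t * (c ^ 2 + d ^ 2) = 1 := by nlinarith [hdet]
  have key0 : 2 * c * d * u * (t * (1 + t)) = d ^ 2 * (t - 1) * (t * (1 + t)) := by
    linear_combination h2' - (d ^ 2 - t * c ^ 2) * h1
  have htt : t * (1 + t) ≠ 0 := by positivity
  have key : 2 * c * d * u = d ^ 2 * (t - 1) := mul_right_cancel₀ htt key0
  rcases eq_or_ne d 0 with hd0 | hd0
  · rw [hd0] at htr; nlinarith [htr]
  · have key2 : 2 * c * u = d * (t - 1) := by
      have : d * (2 * c * u) = d * (d * (t - 1)) := by linear_combination key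
      exact mul_left_cancel₀ hd0 this
    rcases eq_or_ne c 0 with hc0 | hc0
    · rw [hc0] at key2
      simp at key2
      rcases key2 with h' | h'
      · exact hd0 h'
      · exact ht1 (by linarith)
    · have hu2 : u ^ 2 < t := by nlinarith [h1, hvpos]
      have hc2 : 0 < c ^ 2 := by rcases hc0.lt_or_gt with h' | h' <;> nlinarith
      have hfin : d ^ 2 * (t - 1) ^ 2 < 4 * c ^ 2 * t := by nlinarith [key2, hu2, hc2]
      nlinarith [hfin, hdet2, htr]

/-- there is `h ∈ SL(2,ℝ)` taking `z` to `i` and `z'` to the imaginary axis -/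
lemma exists_normalizer (z z' : ℍ) :
    ∃ h : SL2, h • z = I ∧ ((h • z' : ℍ) : ℂ).re = 0 := by
  -- step 1 : translate/scale z to i
  set y := z.im with hy
  have hy0 : 0 < y := z.im_pos
  set sy := Real.sqrt y with hsy
  have hsy0 : 0 < sy := Real.sqrt_pos.2 hy0
  have hsy2 : sy ^ 2 = y := Real.sq_sqrt hy0.le
  have hdet1 : (Matrix.of ![![sy⁻¹, -z.re * sy⁻¹], ![0, sy]]).det = 1 := by
    rw [Matrix.det_fin_two_of]
    field_simp
    simp
  set h₁ : SL2 := ⟨_, hdet1⟩ with hh₁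
  have h₁00 : h₁ 0 0 = sy⁻¹ := rfl
  have h₁01 : h₁ 0 1 = -z.re * sy⁻¹ := rfl
  have h₁10 : h₁ 1 0 = 0 := rfl
  have h₁11 : h₁ 1 1 = sy := rfl
  have hz1 : h₁ • z = I := by
    rw [smul_eq_iff', h₁00, h₁01, h₁10, h₁11]
    have hIco : ((I : ℍ) : ℂ) = Complex.I := rfl
    rw [hIco]
    have hre : ((z : ℂ)) = (z.re : ℝ) + (y : ℝ) * Complex.I := by
      rw [← UpperHalfPlane.re_add_im z]
    rw [hre]
    have : (sy : ℂ) ≠ 0 := by exact_mod_cast hsy0.ne'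
    field_simp
    rw [show ((y:ℝ):ℂ) = (sy:ℂ)^2 by exact_mod_cast hsy2.symm]
    push_cast
    field_simp
    ring
  -- step 2 : rotate about i to put z₁ on the imaginary axis
  set z₁ : ℍ := h₁ • z' with hz₁
  suffices hrot : ∃ k : SL2, k • I = I ∧ ((k • z₁ : ℍ) : ℂ).re = 0 by
    obtain ⟨k, hkI, hkre⟩ := hrot
    refine ⟨k * h₁, ?_, ?_⟩
    · rw [mul_smul, hz1, hkI]
    · rw [mul_smul, ← hz₁]; exact hkre
  -- find cos/sin pair
  set P : ℝ := z₁.re with hP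
  set S : ℝ := Complex.normSq (z₁ : ℂ) with hS
  have hScoord : S = z₁.re ^ 2 + z₁.im ^ 2 := by
    rw [hS, Complex.normSq_apply, UpperHalfPlane.coe_re, UpperHalfPlane.coe_im]; ring
  obtain ⟨cc, ss, hcs, hquad⟩ :
      ∃ cc ss : ℝ, cc ^ 2 + ss ^ 2 = 1 ∧ P * cc ^ 2 + (1 - S) * (cc * ss) - P * ss ^ 2 = 0 := by
    rcases eq_or_ne P 0 with hP0 | hP0
    · exact ⟨1, 0, by norm_num, by rw [hP0]; ring⟩
    · obtain ⟨D, hD⟩ : ∃ D : ℝ, D = (1 - S) ^ 2 + 4 * P ^ 2 := ⟨_, rfl⟩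
      have hDpos : 0 < D := by rw [hD]; positivity
      obtain ⟨δ, hδ⟩ : ∃ δ : ℝ, δ = Real.sqrt D := ⟨_, rfl⟩
      have hδ2 : δ ^ 2 = D := by rw [hδ]; exact Real.sq_sqrt hDpos.le
      obtain ⟨r, hr⟩ : ∃ r : ℝ, r = (S - 1 + δ) / (2 * P) := ⟨_, rfl⟩
      obtain ⟨n, hn⟩ : ∃ n : ℝ, n = Real.sqrt (r ^ 2 + 1) := ⟨_, rfl⟩
      have hnpos : 0 < n := by rw [hn]; exact Real.sqrt_pos.2 (by positivity)
      have hn2 : n ^ 2 = r ^ 2 + 1 := by rw [hn]; exact Real.sq_sqrt (by positivity)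
      have hn0 : n ≠ 0 := hnpos.ne'
      refine ⟨r / n, 1 / n, ?_, ?_⟩
      · field_simp [hn2]
        linarith
      · have hquad0 : P * r ^ 2 + (1 - S) * r - P = 0 := by
          rw [hr]
          field_simp
          linear_combination hδ2 + hD
        have expand : P * (r / n) ^ 2 + (1 - S) * (r / n * (1 / n)) - P * (1 / n) ^ 2
            = (P * r ^ 2 + (1 - S) * r - P) / n ^ 2 := by
          field_simp
        rw [expand, hquad0, zero_div]
  have hdetk : (Matrix.of ![![cc, ss], ![-ss, cc]]).det = 1 := by
    rw [Matrix.det_fin_two_of]; nlinarith [hcs]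
  set k : SL2 := ⟨_, hdetk⟩ with hk
  have k00 : k 0 0 = cc := rfl
  have k01 : k 0 1 = ss := rfl
  have k10 : k 1 0 = -ss := rfl
  have k11 : k 1 1 = cc := rfl
  have hIco : ((I : ℍ) : ℂ) = Complex.I := rfl
  refine ⟨k, ?_, ?_⟩
  · rw [smul_eq_iff', k00, k01, k10, k11, hIco]
    push_cast
    linear_combination (ss : ℂ) * Complex.I_sq
  · rw [smul_coe', k00, k01, k10, k11]
    rw [Complex.div_re, ← add_div, div_eq_zero_iff]
    left
    simp only [Complex.add_re, Complex.add_im, Complex.mul_re, Complex.mul_im,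
      Complex.ofReal_re, Complex.ofReal_im, Complex.neg_re, Complex.neg_im,
      Complex.ofReal_neg, UpperHalfPlane.coe_re, UpperHalfPlane.coe_im]
    rw [hScoord] at hquad
    linear_combination hquad


/-- If `g ∈ SL(2,ℝ)` fixes no point of the upper half-plane (so `g` is hyperbolic or
parabolic), then for every `z`, the equidistant line between `z` and `g•z` is disjoint
from the equidistant line between `g•z` and `g²•z`. -/
theorem equidistant_lines_disjoint (g : Matrix.SpecialLinearGroup (Fin 2) ℝ)
    (hg : ∀ z : UpperHalfPlane, g • z ≠ z) (z : UpperHalfPlane) :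
    ¬ ∃ w : UpperHalfPlane,
        dist w z = dist w (g • z) ∧ dist w (g • z) = dist w (g • (g • z)) := by
  rintro ⟨w, e1, e2⟩
  obtain ⟨h, hz, hre0⟩ := exists_normalizer z (g • z)
  set g' : Matrix.SpecialLinearGroup (Fin 2) ℝ := h * g * h⁻¹ with hg'def
  have hg' : ∀ y : ℍ, g' • y ≠ y := by
    intro y hy
    apply hg (h⁻¹ • y)
    have : h • (g • (h⁻¹ • y)) = y := by
      rw [hg'def] at hy
      rw [← mul_smul, ← mul_smul]
      exact hy
    calc g • h⁻¹ • y = h⁻¹ • (h • (g • (h⁻¹ • y))) := by rw [inv_smul_smul]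
      _ = h⁻¹ • y := by rw [this]
  set t : ℝ := (h • (g • z)).im with hT
  have ht : 0 < t := (h • (g • z)).im_pos
  have hvpt : h • (g • z) = vpt t ht := by
    apply UpperHalfPlane.ext'
    · rw [vpt_re]
      rw [← UpperHalfPlane.coe_re]
      exact hre0
    · rw [vpt_im]
  have ht1 : t ≠ 1 := by
    intro h1
    apply hg z
    have hvi : vpt t ht = I := by
      apply UpperHalfPlane.ext'
      · rw [vpt_re]; rfl
      · rw [vpt_im, h1]; rfl
    have : h • (g • z) = h • z := by rw [hvpt, hvi, hz]
    exact smul_left_cancel h this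
  have htr : 4 ≤ (g' 0 0 + g' 1 1) ^ 2 := by
    by_contra hlt
    obtain ⟨y, hy⟩ := exists_fixed g' (lt_of_not_ge hlt)
    exact hg' y hy
  have hinvz : h⁻¹ • (I : ℍ) = z := by rw [← hz, inv_smul_smul]
  have hgI : g' • I = vpt t ht := by
    rw [hg'def, mul_smul, mul_smul, hinvz, hvpt]
  have hgvpt : g' • vpt t ht = h • (g • (g • z)) := by
    rw [hg'def, mul_smul, mul_smul]
    congr 1
    rw [← hvpt, inv_smul_smul]
  set w' : ℍ := h • w with hw'
  have e1' : dist w' I = dist w' (vpt t ht) := by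
    rw [← hz, ← hvpt, hw', dist_smul, dist_smul]
    exact e1
  have e2' : dist w' (vpt t ht) = dist w' (g' • vpt t ht) := by
    rw [hgvpt, ← hvpt, hw', dist_smul, dist_smul]
    exact e2
  exact lemB g' t ht ht1 htr hgI w' e1' e2'
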